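/- Let T(x) be a homogeneous polynomial of odd degree 2ℓ-1 in variables x = (x₁,…,xₙ), and define T'(x') = T(x)·x₀ for x' = (x₀,x₁,…,xₙ). Then max over x' in the unit sphere Sⁿ of T'(x') equals γ(ℓ) times the max over x in S^(n-1) of T(x), where γ(ℓ) = (2ℓ-1)^(ℓ-1/2)/(ℓ^ℓ·2^ℓ). -/

import Mathlib

open Real
lemma amgm (d : ℕ) (hd : 1 ≤ d) (a b : ℝ) (ha : 0 ≤ a) (hb : 0 ≤ b) (hab : a + b = 1) :
    a ^ d * b ≤ (d : ℝ) ^ d / ((d : ℝ) + 1) ^ (d + 1) := by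
  set D : ℝ := (d : ℝ) with hD
  have hD1 : (1:ℝ) ≤ D := Nat.one_le_cast.mpr hd
  have hDpos : 0 < D := by linarith
  have hD1pos : 0 < D + 1 := by linarith
  have key := Real.geom_mean_le_arith_mean2_weighted
    (w₁ := D / (D+1)) (w₂ := 1 / (D+1)) (p₁ := a * (D+1) / D) (p₂ := b * (D+1))
    (by positivity) (by positivity) (by positivity) (by positivity)
    (by field_simp)
  have hsum : D / (D+1) * (a * (D+1) / D) + 1 / (D+1) * (b * (D+1)) = 1 := by
    field_simp; linear_combination hab
  rw [hsum] at key
  have key2 : ((a * (D+1) / D) ^ (D / (D+1))) ^ (D+1) * ((b * (D+1)) ^ (1 / (D+1))) ^ (D+1) ≤ 1 := by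
    have h0 : (0:ℝ) ≤ (a * (D+1) / D) ^ (D / (D+1)) * (b * (D+1)) ^ (1 / (D+1)) := by
      positivity
    calc ((a * (D+1) / D) ^ (D / (D+1))) ^ (D+1) * ((b * (D+1)) ^ (1 / (D+1))) ^ (D+1)
        = ((a * (D+1) / D) ^ (D / (D+1)) * (b * (D+1)) ^ (1 / (D+1))) ^ (D+1) := by
          exact (Real.mul_rpow (by positivity) (by positivity)).symm
      _ ≤ (1:ℝ) ^ (D+1) := Real.rpow_le_rpow h0 key (by linarith)
      _ = 1 := Real.one_rpow _
  rw [← Real.rpow_mul (by positivity), ← Real.rpow_mul (by positivity)] at key2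
  have e1 : D / (D+1) * (D+1) = D := by field_simp
  have e2 : 1 / (D+1) * (D+1) = 1 := by field_simp
  rw [e1, e2, Real.rpow_one, hD, Real.rpow_natCast] at key2
  rw [le_div_iff₀ (by positivity)]
  have eq : D ^ d * ((a*(D+1)/D)^d * (b*(D+1))) = a^d*b*(D+1)^(d+1) := by
    rw [div_pow, mul_pow, pow_succ]; field_simp
  have := mul_le_mul_of_nonneg_left key2 (le_of_lt (pow_pos hDpos d))
  rw [eq, mul_one] at this
  exact this

noncomputable def gam (ℓ : ℕ) : ℝ :=
  (2 * (ℓ : ℝ) - 1) ^ ((ℓ : ℝ) - 1 / 2) / ((ℓ : ℝ) ^ ℓ * 2 ^ ℓ)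

lemma L_pos {ℓ : ℕ} (hℓ : 1 ≤ ℓ) : (0:ℝ) < (ℓ:ℝ) := by exact_mod_cast hℓ

lemma hx_pos {ℓ : ℕ} (hℓ : 1 ≤ ℓ) : (0:ℝ) < 2 * (ℓ:ℝ) - 1 := by
  have := L_pos hℓ; have : (1:ℝ) ≤ (ℓ:ℝ) := Nat.one_le_cast.mpr hℓ; linarith

lemma gam_nonneg {ℓ : ℕ} (hℓ : 1 ≤ ℓ) : 0 ≤ gam ℓ := by
  have h1 := hx_pos hℓ
  have h2 := L_pos hℓ
  unfold gam
  positivity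

lemma gam_sq {ℓ : ℕ} (hℓ : 1 ≤ ℓ) :
    gam ℓ ^ 2 = (2 * (ℓ:ℝ) - 1) ^ (2*ℓ-1) / (2 * (ℓ:ℝ)) ^ (2*ℓ-1+1) := by
  have hx := hx_pos hℓ
  have hL := L_pos hℓ
  unfold gam
  rw [div_pow, ← Real.rpow_natCast ((2 * (ℓ:ℝ) - 1) ^ ((ℓ:ℝ) - 1/2)) 2,
    ← Real.rpow_mul hx.le]
  have e : ((ℓ:ℝ) - 1/2) * (2:ℕ) = ((2*ℓ-1 : ℕ) : ℝ) := by
    have : ((2*ℓ-1 : ℕ) : ℝ) = 2*(ℓ:ℝ) - 1 := by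
      push_cast [Nat.cast_sub (by omega : 1 ≤ 2*ℓ)]; ring
    rw [this]; push_cast; ring
  rw [e, Real.rpow_natCast]
  congr 1
  have : 2*ℓ-1+1 = 2*ℓ := by omega
  rw [this, mul_pow, mul_pow, ← pow_mul, ← pow_mul]
  ring

lemma key_le {ℓ : ℕ} (hℓ : 1 ≤ ℓ) (s t : ℝ) (hs : 0 ≤ s) (ht : 0 ≤ t)
    (h : s^2 + t^2 = 1) : s ^ (2*ℓ-1) * t ≤ gam ℓ := by
  have hd : 1 ≤ 2*ℓ-1 := by omega
  have h1 := amgm (2*ℓ-1) hd (s^2) (t^2) (sq_nonneg s) (sq_nonneg t) h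
  have hD : ((2*ℓ-1 : ℕ) : ℝ) = 2*(ℓ:ℝ) - 1 := by
    push_cast [Nat.cast_sub (by omega : 1 ≤ 2*ℓ)]; ring
  have hsq : (s ^ (2*ℓ-1) * t)^2 ≤ gam ℓ ^ 2 := by
    rw [gam_sq hℓ]
    calc (s ^ (2*ℓ-1) * t)^2 = (s^2) ^ (2*ℓ-1) * t^2 := by ring
      _ ≤ ((2*ℓ-1:ℕ):ℝ) ^ (2*ℓ-1) / (((2*ℓ-1:ℕ):ℝ) + 1) ^ (2*ℓ-1+1) := h1
      _ = (2 * (ℓ:ℝ) - 1) ^ (2*ℓ-1) / (2 * (ℓ:ℝ)) ^ (2*ℓ-1+1) := by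
          rw [hD]; ring_nf
  have h0 : 0 ≤ s ^ (2*ℓ-1) * t := by positivity
  nlinarith [gam_nonneg hℓ]

lemma key_eq {ℓ : ℕ} (hℓ : 1 ≤ ℓ) :
    (Real.sqrt ((2*(ℓ:ℝ)-1)/(2*(ℓ:ℝ)))) ^ (2*ℓ-1) * Real.sqrt (1/(2*(ℓ:ℝ))) = gam ℓ ∧
    (Real.sqrt ((2*(ℓ:ℝ)-1)/(2*(ℓ:ℝ))))^2 + (Real.sqrt (1/(2*(ℓ:ℝ))))^2 = 1 := by
  have hx := hx_pos hℓ
  have hL := L_pos hℓ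
  set s := Real.sqrt ((2*(ℓ:ℝ)-1)/(2*(ℓ:ℝ))) with hs
  set t := Real.sqrt (1/(2*(ℓ:ℝ))) with ht
  have hs2 : s^2 = (2*(ℓ:ℝ)-1)/(2*(ℓ:ℝ)) := Real.sq_sqrt (by positivity)
  have ht2 : t^2 = 1/(2*(ℓ:ℝ)) := Real.sq_sqrt (by positivity)
  have hsum : s^2 + t^2 = 1 := by rw [hs2, ht2]; field_simp; ring
  refine ⟨?_, hsum⟩
  have hsq : (s ^ (2*ℓ-1) * t)^2 = gam ℓ ^ 2 := by
    rw [gam_sq hℓ]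
    calc (s ^ (2*ℓ-1) * t)^2 = (s^2) ^ (2*ℓ-1) * t^2 := by ring
      _ = (2 * (ℓ:ℝ) - 1) ^ (2*ℓ-1) / (2 * (ℓ:ℝ)) ^ (2*ℓ-1+1) := by
          rw [hs2, ht2, div_pow, pow_succ]; field_simp
  have h0 : 0 ≤ s ^ (2*ℓ-1) * t := by positivity
  nlinarith [gam_nonneg hℓ]


lemma sphere_compact (n : ℕ) : IsCompact {x : Fin n → ℝ | ∑ i, x i ^ 2 = 1} := by
  apply Metric.isCompact_of_isClosed_isBounded
  · exact isClosed_eq (by continuity) continuous_const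
  · apply (Metric.isBounded_closedBall (x := (0 : Fin n → ℝ)) (r := 1)).subset
    intro x hx
    rw [Metric.mem_closedBall, dist_zero_right]
    rw [pi_norm_le_iff_of_nonneg zero_le_one]
    intro i
    rw [Real.norm_eq_abs, ← sq_le_one_iff_abs_le_one]
    calc x i ^ 2 ≤ ∑ j, x j ^ 2 :=
      Finset.single_le_sum (fun j _ => sq_nonneg (x j)) (Finset.mem_univ i)
    _ = 1 := hx

lemma eval_smul_pow {n : ℕ} (T : MvPolynomial (Fin n) ℝ) (d : ℕ) (h : T.IsHomogeneous d)
    (c : ℝ) (x : Fin n → ℝ) : MvPolynomial.eval (c • x) T = c ^ d * MvPolynomial.eval x T := by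
  rw [MvPolynomial.eval_eq, MvPolynomial.eval_eq, Finset.mul_sum]
  refine Finset.sum_congr rfl fun m hm => ?_
  have hdeg : ∑ i ∈ m.support, m i = d := by
    have := h (Finsupp.mem_support_iff.mp hm)
    simpa [Finsupp.weight_apply, Finsupp.sum] using this
  simp only [Pi.smul_apply, smul_eq_mul, mul_pow, Finset.prod_mul_distrib,
    Finset.prod_pow_eq_pow_sum, hdeg]
  ring

open MvPolynomial in
theorem stmt1 (n ℓ : ℕ) (hℓ : 1 ≤ ℓ) (T : MvPolynomial (Fin n) ℝ)
    (hT : T.IsHomogeneous (2 * ℓ - 1)) :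
    sSup {y : ℝ | ∃ x' : Fin (n + 1) → ℝ, ∑ i, x' i ^ 2 = 1 ∧
        y = MvPolynomial.eval x' (MvPolynomial.rename Fin.succ T * MvPolynomial.X 0)} =
      ((2 * (ℓ : ℝ) - 1) ^ ((ℓ : ℝ) - 1 / 2) / ((ℓ : ℝ) ^ ℓ * 2 ^ ℓ)) *
        sSup {y : ℝ | ∃ x : Fin n → ℝ, ∑ i, x i ^ 2 = 1 ∧ y = MvPolynomial.eval x T} := by
  have hgam : ((2 * (ℓ : ℝ) - 1) ^ ((ℓ : ℝ) - 1 / 2) / ((ℓ : ℝ) ^ ℓ * 2 ^ ℓ)) = gam ℓ := rfl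
  rw [hgam]
  have hg0 := gam_nonneg hℓ
  have hodd : Odd (2 * ℓ - 1) := ⟨ℓ - 1, by omega⟩
  have hd1 : 2 * ℓ - 1 ≠ 0 := by omega
  rcases n with _ | m
  · -- n = 0 : T must be 0
    have hT0 : T = 0 := by
      ext d
      by_contra hc
      have := hT hc
      have hd0 : d = 0 := Subsingleton.elim d 0
      rw [hd0] at this
      simp [Finsupp.weight_apply, Finsupp.sum] at this
      omega
    subst hT0
    have hA : {y : ℝ | ∃ x : Fin 0 → ℝ, ∑ i, x i ^ 2 = 1 ∧ y = eval x (0 : MvPolynomial (Fin 0) ℝ)}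
        = ∅ := by
      ext y; simp
    have hB : {y : ℝ | ∃ x' : Fin 1 → ℝ, ∑ i, x' i ^ 2 = 1 ∧
        y = eval x' (rename Fin.succ (0 : MvPolynomial (Fin 0) ℝ) * X 0)} = {0} := by
      ext y
      simp only [map_zero, zero_mul, map_zero, Set.mem_setOf_eq, Set.mem_singleton_iff]
      constructor
      · rintro ⟨x', -, rfl⟩; rfl
      · rintro rfl
        exact ⟨fun _ => 1, by simp, rfl⟩
    rw [hA, hB, Real.sSup_empty, csSup_singleton, mul_zero]
  · -- main case
    set f : (Fin (m+1) → ℝ) → ℝ := fun x => eval x T with hf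
    have hfc : Continuous f := MvPolynomial.continuous_eval T
    set S : Set (Fin (m+1) → ℝ) := {x | ∑ i, x i ^ 2 = 1} with hSdef
    have hScpt : IsCompact S := sphere_compact (m+1)
    have hSne : S.Nonempty := by
      refine ⟨fun i => if i = 0 then 1 else 0, ?_⟩
      have : ∀ i : Fin (m+1), ((if i = 0 then (1:ℝ) else 0)) ^ 2 = if i = 0 then 1 else 0 := by
        intro i; split <;> norm_num
      simp only [hSdef, Set.mem_setOf_eq, this]
      simp
    have hA : {y : ℝ | ∃ x : Fin (m+1) → ℝ, ∑ i, x i ^ 2 = 1 ∧ y = eval x T} = f '' S := by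
      ext y; constructor
      · rintro ⟨x, hx, rfl⟩; exact ⟨x, hx, rfl⟩
      · rintro ⟨x, hx, rfl⟩; exact ⟨x, hx, rfl⟩
    rw [hA]
    set M := sSup (f '' S) with hM
    have hAcpt : IsCompact (f '' S) := hScpt.image hfc
    have hAbdd : BddAbove (f '' S) := hAcpt.bddAbove
    have hMmem : M ∈ f '' S := hAcpt.sSup_mem (hSne.image f)
    -- negation
    have hneg : ∀ u ∈ S, (-u) ∈ S ∧ f (-u) = - f u := by
      intro u hu
      constructor
      · simpa [hSdef, Set.mem_setOf_eq, neg_pow] using hu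
      · have : (-u) = (-1 : ℝ) • u := by funext i; simp
        rw [hf]
        simp only
        rw [this, eval_smul_pow T _ hT, hodd.neg_one_pow]
        ring
    have hfle : ∀ u ∈ S, f u ≤ M ∧ |f u| ≤ M := by
      intro u hu
      have h1 : f u ≤ M := le_csSup hAbdd ⟨u, hu, rfl⟩
      have h2 : f (-u) ≤ M := le_csSup hAbdd ⟨-u, (hneg u hu).1, rfl⟩
      rw [(hneg u hu).2] at h2
      exact ⟨h1, abs_le.mpr ⟨by linarith, h1⟩⟩
    have hM0 : 0 ≤ M := by
      obtain ⟨u, hu⟩ := hSne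
      have := hfle u hu
      have h2 : f (-u) ≤ M := le_csSup hAbdd ⟨-u, (hneg u hu).1, rfl⟩
      rw [(hneg u hu).2] at h2
      linarith [this.1]
    -- evaluation formula
    have heval : ∀ x' : Fin (m + 1 + 1) → ℝ,
        eval x' (rename Fin.succ T * X 0) = f (x' ∘ Fin.succ) * x' 0 := by
      intro x'
      rw [map_mul, eval_rename, eval_X]
    -- upper bound
    have hub : ∀ y ∈ {y : ℝ | ∃ x' : Fin (m + 1 + 1) → ℝ, ∑ i, x' i ^ 2 = 1 ∧
        y = eval x' (rename Fin.succ T * X 0)}, y ≤ gam ℓ * M := by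
      rintro y ⟨x', hx', rfl⟩
      rw [heval]
      set v : Fin (m+1) → ℝ := x' ∘ Fin.succ with hv
      set t := x' 0 with htdef
      have hsum : t ^ 2 + ∑ i, v i ^ 2 = 1 := by
        rw [← hx']; exact (Fin.sum_univ_succ fun i => x' i ^ 2).symm
      set q := ∑ i, v i ^ 2 with hq
      have hq0 : 0 ≤ q := Finset.sum_nonneg fun i _ => sq_nonneg (v i)
      rcases eq_or_lt_of_le hq0 with hq' | hq'
      · -- v = 0
        have hv0 : v = 0 := by
          funext i
          have := (Finset.sum_eq_zero_iff_of_nonneg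
            (fun j _ => sq_nonneg (v j))).mp hq'.symm i (Finset.mem_univ i)
          exact pow_eq_zero_iff (n := 2) (by norm_num) |>.mp this
        have hf0 : f v = 0 := by
          rw [hv0]
          have : (0 : Fin (m+1) → ℝ) = (0 : ℝ) • (0 : Fin (m+1) → ℝ) := by simp
          rw [hf]; simp only
          rw [this, eval_smul_pow T _ hT, zero_pow hd1, zero_mul]
        rw [hf0, zero_mul]
        positivity
      · -- v ≠ 0, scale
        set s := Real.sqrt q with hs
        have hspos : 0 < s := Real.sqrt_pos.mpr hq'
        have hs2 : s ^ 2 = q := Real.sq_sqrt hq0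
        set u : Fin (m+1) → ℝ := s⁻¹ • v with hu
        have huS : u ∈ S := by
          simp only [hSdef, Set.mem_setOf_eq, hu, Pi.smul_apply, smul_eq_mul, mul_pow]
          rw [← Finset.mul_sum, ← hq]
          rw [← hs2]
          field_simp
        have hveq : v = s • u := by
          funext i
          simp only [hu, Pi.smul_apply, smul_eq_mul]
          rw [← mul_assoc, mul_inv_cancel₀ hspos.ne', one_mul]
        have hfv : f v = s ^ (2 * ℓ - 1) * f u := by
          rw [hveq, hf]; exact eval_smul_pow T _ hT s u
        have hkey : s ^ (2 * ℓ - 1) * |t| ≤ gam ℓ := by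
          apply key_le hℓ s |t| hspos.le (abs_nonneg t)
          rw [sq_abs, hs2]; linarith
        have habs := (hfle u huS).2
        calc f v * t ≤ |f v * t| := le_abs_self _
          _ = s ^ (2 * ℓ - 1) * |f u| * |t| := by
              rw [abs_mul, hfv, abs_mul, abs_of_nonneg (pow_nonneg hspos.le _)]
          _ ≤ s ^ (2 * ℓ - 1) * M * |t| := by
              exact mul_le_mul_of_nonneg_right
                (mul_le_mul_of_nonneg_left habs (pow_nonneg hspos.le _)) (abs_nonneg t)
          _ = (s ^ (2 * ℓ - 1) * |t|) * M := by ring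
          _ ≤ gam ℓ * M := mul_le_mul_of_nonneg_right hkey hM0
    -- attainment
    obtain ⟨u, huS, huM⟩ := hMmem
    obtain ⟨hkeq, hksum⟩ := key_eq hℓ
    set s := Real.sqrt ((2*(ℓ:ℝ)-1)/(2*(ℓ:ℝ))) with hs
    set t := Real.sqrt (1/(2*(ℓ:ℝ))) with ht
    have hmem : gam ℓ * M ∈ {y : ℝ | ∃ x' : Fin (m + 1 + 1) → ℝ, ∑ i, x' i ^ 2 = 1 ∧
        y = eval x' (rename Fin.succ T * X 0)} := by
      refine ⟨Fin.cons t (s • u), ?_, ?_⟩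
      · rw [Fin.sum_univ_succ]
        simp only [Fin.cons_zero, Fin.cons_succ, Pi.smul_apply, smul_eq_mul, mul_pow]
        rw [← Finset.mul_sum, huS, mul_one]
        linarith
      · rw [heval]
        have hcomp : (Fin.cons t (s • u) ∘ Fin.succ : Fin (m+1) → ℝ) = s • u := by
          funext i; simp
        rw [hcomp, Fin.cons_zero]
        show gam ℓ * M = (MvPolynomial.eval (s • u)) T * t
        rw [eval_smul_pow T _ hT]
        show gam ℓ * M = s ^ (2 * ℓ - 1) * f u * t
        rw [huM, ← hkeq]; ring
    apply le_antisymm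
    · exact Real.sSup_le hub (by positivity)
    · exact le_csSup ⟨gam ℓ * M, hub⟩ hmem
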